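/- Let n ≥ 1, let S ⊆ ℝ^{n+1} be a cone whose linear span is all of ℝ^{n+1}, let p ∈ ℝ^{n+1} be nonzero, and let c be a natural number with c + 1 ≤ n + 1. Assume that for every linear subspace W ⊆ ℝ^{n+1} with dim W = c + 1 and p ∈ W, the set of one-dimensional subspaces { ℝ·x : x ∈ (S ∩ W) ∖ {0} } has at most c elements. Then rank_S(p) ≥ c + 2. -/

import Mathlib

open scoped BigOperators

open Submodule Module

/-- The real rank of `p` with respect to a subset `S` of a real vector space:
the least `r : ℕ∞` such that `p` is a sum of `r` elements of `S` (`∞` if none exists). -/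
noncomputable def realRank {V : Type*} [AddCommMonoid V] (S : Set V) (p : V) : ℕ∞ :=
  sInf ((fun n : ℕ => (n : ℕ∞)) ''
    {r : ℕ | ∃ x : Fin r → V, (∀ i, x i ∈ S) ∧ ∑ i, x i = p})

/-- The dimension of the span of a finite set is at most the number of distinct lines
spanned by its elements. -/
lemma aux_finrank_le_encard {V : Type*} [AddCommGroup V] [Module ℝ V]
    {T : Set V} (hT : T.Finite) :
    (Module.finrank ℝ (Submodule.span ℝ T) : ℕ∞) ≤
      ((fun t => Submodule.span ℝ {t}) '' T).encard := by
  refine Set.Finite.induction_on _ hT (by rw [Submodule.span_empty]; simp) ?_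
  intro a T ha hTfin ih
  · 
    by_cases hmem : a ∈ Submodule.span ℝ T
    · rw [Submodule.span_insert_eq_span hmem, Set.image_insert_eq]
      exact le_trans ih (Set.encard_mono (Set.subset_insert _ _))
    · have ha0 : a ≠ 0 := fun h => hmem (h ▸ Submodule.zero_mem _)
      haveI := FiniteDimensional.span_of_finite ℝ hTfin
      haveI : FiniteDimensional ℝ (Submodule.span ℝ ({a} : Set V)) :=
        FiniteDimensional.span_of_finite ℝ (Set.finite_singleton a)
      -- the new line is new
      have hnotmem : Submodule.span ℝ ({a} : Set V) ∉
          (fun t => Submodule.span ℝ {t}) '' T := by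
        rintro ⟨t, htT, hteq⟩
        have hteq' : Submodule.span ℝ ({t} : Set V) = Submodule.span ℝ {a} := hteq
        have h1 : a ∈ Submodule.span ℝ ({t} : Set V) := by
          rw [hteq']; exact Submodule.mem_span_singleton_self a
        exact hmem (Submodule.span_le.mpr
          (Set.singleton_subset_iff.mpr (Submodule.subset_span htT)) h1)
      -- finrank grows by at most 1
      have hfr : finrank ℝ (Submodule.span ℝ (insert a T)) ≤
          finrank ℝ (Submodule.span ℝ T) + 1 := by
        rw [Submodule.span_insert]
        have := Submodule.finrank_sup_add_finrank_inf_eq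
          (Submodule.span ℝ ({a} : Set V)) (Submodule.span ℝ T)
        have h1 : finrank ℝ (Submodule.span ℝ ({a} : Set V)) = 1 :=
          finrank_span_singleton ha0
        omega
      rw [Set.image_insert_eq, Set.encard_insert_of_notMem hnotmem]
      calc (finrank ℝ (Submodule.span ℝ (insert a T)) : ℕ∞)
          ≤ (finrank ℝ (Submodule.span ℝ T) : ℕ∞) + 1 := by exact_mod_cast hfr
        _ ≤ ((fun t => Submodule.span ℝ {t}) '' T).encard + 1 := by
            exact add_le_add_left ih 1

/-- Extension lemma: a finite subset of a spanning set can be extended so that its span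
has any prescribed larger dimension, with the number of lines increasing accordingly. -/
lemma aux_extend (n c : ℕ) (S : Set (Fin (n + 1) → ℝ))
    (hspan : Submodule.span ℝ S = ⊤) (hc : c + 1 ≤ n + 1) :
    ∀ k : ℕ, ∀ T : Set (Fin (n + 1) → ℝ), T.Finite → T ⊆ S → 0 ∉ T →
      finrank ℝ (Submodule.span ℝ T) + k = c + 1 →
      ∃ T' : Set (Fin (n + 1) → ℝ), T ⊆ T' ∧ T'.Finite ∧ T' ⊆ S ∧ 0 ∉ T' ∧
        finrank ℝ (Submodule.span ℝ T') = c + 1 ∧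
        ((fun t => Submodule.span ℝ {t}) '' T).encard + k ≤
          ((fun t => Submodule.span ℝ {t}) '' T').encard := by
  intro k
  induction k with
  | zero =>
    intro T hTfin hTS hT0 hfr
    exact ⟨T, le_refl T, hTfin, hTS, hT0, by omega, by simp⟩
  | succ k ih =>
    intro T hTfin hTS hT0 hfr
    -- the span of T is not everything
    have hlt : Submodule.span ℝ T < ⊤ := by
      apply Submodule.lt_top_of_finrank_lt_finrank
      rw [Module.finrank_fin_fun]
      omega
    -- pick s ∈ S outside the span of T
    have hex : ∃ s ∈ S, s ∉ Submodule.span ℝ T := by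
      by_contra hcon
      push_neg at hcon
      exact hlt.ne (top_le_iff.mp (hspan ▸ Submodule.span_le.mpr hcon))
    obtain ⟨s, hsS, hs⟩ := hex
    have hs0 : s ≠ 0 := fun h => hs (h ▸ Submodule.zero_mem _)
    -- the span grows by exactly one dimension
    have hinf : Submodule.span ℝ ({s} : Set (Fin (n + 1) → ℝ)) ⊓ Submodule.span ℝ T = ⊥ := by
      rw [eq_bot_iff]
      rintro x ⟨hx1, hx2⟩
      obtain ⟨r, rfl⟩ := Submodule.mem_span_singleton.mp hx1
      rcases eq_or_ne r 0 with h | h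
      · simp [h]
      · exact absurd (Submodule.smul_mem _ r⁻¹ hx2) (by rwa [inv_smul_smul₀ h])
    have hfr' : finrank ℝ (Submodule.span ℝ (insert s T)) =
        finrank ℝ (Submodule.span ℝ T) + 1 := by
      rw [Submodule.span_insert]
      have := Submodule.finrank_sup_add_finrank_inf_eq
        (Submodule.span ℝ ({s} : Set (Fin (n + 1) → ℝ))) (Submodule.span ℝ T)
      rw [hinf] at this
      have h1 : finrank ℝ (Submodule.span ℝ ({s} : Set (Fin (n + 1) → ℝ))) = 1 :=
        finrank_span_singleton hs0
      simp only [finrank_bot] at this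
      omega
    obtain ⟨T', hTT', hT'fin, hT'S, hT'0, hT'fr, hT'enc⟩ :=
      ih (insert s T) (hTfin.insert s) (Set.insert_subset hsS hTS)
        (by simp [Ne.symm hs0, hT0]) (by omega)
    refine ⟨T', (Set.subset_insert s T).trans hTT', hT'fin, hT'S, hT'0, hT'fr, ?_⟩
    have hnotmem : Submodule.span ℝ ({s} : Set (Fin (n + 1) → ℝ)) ∉
        (fun t => Submodule.span ℝ {t}) '' T := by
      rintro ⟨t, htT, hteq⟩
      have hteq' : Submodule.span ℝ ({t} : Set (Fin (n + 1) → ℝ)) = Submodule.span ℝ {s} := hteq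
      have h1 : s ∈ Submodule.span ℝ ({t} : Set (Fin (n + 1) → ℝ)) := by
        rw [hteq']; exact Submodule.mem_span_singleton_self s
      exact hs (Submodule.span_le.mpr
        (Set.singleton_subset_iff.mpr (Submodule.subset_span htT)) h1)
    rw [Set.image_insert_eq, Set.encard_insert_of_notMem hnotmem] at hT'enc
    calc ((fun t => Submodule.span ℝ {t}) '' T).encard + (k + 1 : ℕ)
        = ((fun t => Submodule.span ℝ {t}) '' T).encard + 1 + (k : ℕ) := by
          push_cast; ring
      _ ≤ _ := hT'enc

/-- If `S ⊆ ℝ^{n+1}` is a spanning cone and every linear subspace `W` of dimension `c + 1`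
through `p ≠ 0` meets `S` in at most `c` one-dimensional subspaces, then the real rank of `p`
with respect to `S` is at least `c + 2`. -/
theorem statement4 (n : ℕ) (hn : 1 ≤ n) (S : Set (Fin (n + 1) → ℝ))
    (hcone : ∀ (lam : ℝ) (x : Fin (n + 1) → ℝ), x ∈ S → lam • x ∈ S)
    (hspan : Submodule.span ℝ S = ⊤)
    (p : Fin (n + 1) → ℝ) (hp : p ≠ 0)
    (c : ℕ) (hc : c + 1 ≤ n + 1)
    (hW : ∀ W : Submodule ℝ (Fin (n + 1) → ℝ), Module.finrank ℝ W = c + 1 → p ∈ W →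
      {L : Submodule ℝ (Fin (n + 1) → ℝ) |
        ∃ x ∈ S ∩ (W : Set (Fin (n + 1) → ℝ)), x ≠ 0 ∧ L = Submodule.span ℝ {x}}.encard ≤ c) :
    (c + 2 : ℕ) ≤ realRank S p := by
  by_contra hcon
  push_neg at hcon
  rw [realRank] at hcon
  obtain ⟨m, hm, hmlt⟩ := sInf_lt_iff.mp hcon
  obtain ⟨r, ⟨x, hxS, hxsum⟩, rfl⟩ := hm
  have hr : r ≤ c + 1 := by
    have hmlt' : (r : ℕ∞) < ((c + 2 : ℕ) : ℕ∞) := hmlt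
    have : r < c + 2 := by exact_mod_cast hmlt'
    omega
  classical
  -- the set of nonzero summands
  set T : Set (Fin (n + 1) → ℝ) := Set.range x \ {0} with hTdef
  have hTfin : T.Finite := (Set.finite_range x).diff (t := {0})
  have hTS : T ⊆ S := by rintro t ⟨⟨i, rfl⟩, _⟩; exact hxS i
  have hT0 : 0 ∉ T := fun h => h.2 rfl
  have hpmem : p ∈ Submodule.span ℝ T := by
    rw [← hxsum]
    apply Submodule.sum_mem
    intro i _
    by_cases h : x i = 0
    · rw [h]; exact Submodule.zero_mem _
    · exact Submodule.subset_span ⟨⟨i, rfl⟩, h⟩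
  -- the dimension of the span of T is at most r
  have hd : finrank ℝ (Submodule.span ℝ T) ≤ r := by
    have h1 : Submodule.span ℝ T ≤ Submodule.span ℝ (Set.range x) :=
      Submodule.span_mono Set.diff_subset
    have h2 : finrank ℝ (Submodule.span ℝ (Set.range x)) ≤ r := by
      refine le_trans (finrank_span_le_card (Set.range x)) ?_
      rw [Set.toFinset_range]
      exact le_trans (Finset.card_image_le) (by simp)
    exact le_trans (Submodule.finrank_mono h1) h2
  set d : ℕ := finrank ℝ (Submodule.span ℝ T) with hddef
  have hdc : d ≤ c + 1 := le_trans hd hr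
  -- extend T to span a (c+1)-dimensional subspace
  obtain ⟨T', hTT', hT'fin, hT'S, hT'0, hT'fr, hT'enc⟩ :=
    aux_extend n c S hspan hc (c + 1 - d) T hTfin hTS hT0 (by omega)
  set W := Submodule.span ℝ T' with hWdef
  have hpW : p ∈ W := Submodule.span_mono hTT' hpmem
  have hWle := hW W hT'fr hpW
  -- the lines spanned by elements of T' are among the lines counted by hW
  have hsub : (fun t => Submodule.span ℝ {t}) '' T' ⊆
      {L : Submodule ℝ (Fin (n + 1) → ℝ) |
        ∃ x ∈ S ∩ (W : Set (Fin (n + 1) → ℝ)), x ≠ 0 ∧ L = Submodule.span ℝ {x}} := by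
    rintro L ⟨t, htT', rfl⟩
    exact ⟨t, ⟨hT'S htT', Submodule.subset_span htT'⟩,
      fun h => hT'0 (h ▸ htT'), rfl⟩
  -- counting gives a contradiction
  have hbig : (c + 1 : ℕ∞) ≤ ((fun t => Submodule.span ℝ {t}) '' T').encard := by
    have hk : d + (c + 1 - d) = c + 1 := by omega
    calc (c + 1 : ℕ∞) = (d : ℕ∞) + (c + 1 - d : ℕ) := by
          rw [← Nat.cast_add, hk]; push_cast; ring
      _ ≤ ((fun t => Submodule.span ℝ {t}) '' T).encard + (c + 1 - d : ℕ) :=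
          add_le_add_left (aux_finrank_le_encard hTfin) _
      _ ≤ _ := hT'enc
  have : (c + 1 : ℕ∞) ≤ (c : ℕ∞) :=
    le_trans hbig (le_trans (Set.encard_mono hsub) hWle)
  have : (c + 1 : ℕ) ≤ c := by exact_mod_cast this
  omega
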